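/- Let G be a finite directed multigraph with vertex set {v₀, v₁, …, v_N} (a finite type E of edges with source and target maps src, tgt : E → {0,1,…,N}). Then the set of irreducible cycles of G is finite. -/

import Mathlib

/-- A nonempty list of edges is a cycle: consecutive edges are composable and the target
of the last edge is the source of the first. -/
def IsCycleList {V E : Type*} (src tgt : E → V) (l : List E) : Prop :=
  l ≠ [] ∧ l.Chain' (fun e e' => tgt e = src e') ∧ l.head?.map src = l.getLast?.map tgt

/-- A cycle is positive if it starts (and ends) at some vertex `v_i` and only passes
through vertices `v_j` with `j ≥ i`. -/
def IsPositiveCycle {N : ℕ} {E : Type*} (src tgt : E → Fin (N + 1)) (l : List E) : Prop :=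
  IsCycleList src tgt l ∧
    ∀ e₀ ∈ l.head?, ∀ e ∈ l, src e₀ ≤ src e ∧ src e₀ ≤ tgt e

/-- A cycle is irreducible if it is positive and no proper contiguous subsequence of its
edges forms a positive cycle. -/
def IsIrreducibleCycle {N : ℕ} {E : Type*} (src tgt : E → Fin (N + 1)) (l : List E) : Prop :=
  IsPositiveCycle src tgt l ∧
    ¬ ∃ l₁ m l₂ : List E, l = l₁ ++ m ++ l₂ ∧ m.length < l.length ∧
      IsPositiveCycle src tgt m

section Aux

open List

variable {V : Type*} [LinearOrder V]

/-- No "positive subcycle pattern" in a list of vertices. -/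
def NoPat (w : List V) : Prop :=
  ¬ ∃ (w₁ : List V) (x : V) (m w₂ : List V),
      w = w₁ ++ x :: (m ++ x :: w₂) ∧ ∀ y ∈ m, x ≤ y

lemma NoPat.of_infix {w a c : List V} (h : NoPat (a ++ w ++ c)) : NoPat w := by
  rintro ⟨w₁, x, m, w₂, hw, hm⟩
  exact h ⟨a ++ w₁, x, m, w₂ ++ c, by rw [hw]; simp, hm⟩

lemma exists_last_occ {α : Type*} {x : α} :
    ∀ {w : List α}, x ∈ w → ∃ w₁ w₂, w = w₁ ++ x :: w₂ ∧ x ∉ w₂ := by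
  intro w hw
  induction w with
  | nil => simp at hw
  | cons a t ih =>
    by_cases hxt : x ∈ t
    · obtain ⟨w₁, w₂, h1, h2⟩ := ih hxt
      exact ⟨a :: w₁, w₂, by rw [h1]; rfl, h2⟩
    · have hax : x = a := by
        rcases List.mem_cons.mp hw with h | h
        · exact h
        · exact absurd h hxt
      exact ⟨[], t, by simp [hax], hxt⟩

lemma walk_len (n : ℕ) : ∀ (S : Finset V) (w : List V), S.card ≤ n →
    (∀ x ∈ w, x ∈ S) → NoPat w → w.length ≤ 2 ^ n - 1 := by
  classical
  induction n with
  | zero =>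
    intro S w hS hmem hnp
    match w, hnp with
    | [], _ => simp
    | y :: t, _ =>
      have hy := hmem y (by simp)
      have : S = ∅ := Finset.card_eq_zero.mp (Nat.le_zero.mp hS)
      simp [this] at hy
  | succ n ih =>
    intro S w hS hmem hnp
    match w, hnp, hmem with
    | [], _, _ => simp
    | b :: t, hnp, hmem =>
      set w := b :: t with hwdef
      have hne : w.toFinset.Nonempty := ⟨b, by simp [hwdef]⟩
      obtain ⟨x, hxmem, hxmin⟩ := Finset.exists_min_image w.toFinset id hne
      rw [List.mem_toFinset] at hxmem
      have hmin : ∀ y ∈ w, x ≤ y := fun y hy => hxmin y (List.mem_toFinset.mpr hy)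
      obtain ⟨w₁, w₂, hsplit, hx2⟩ := exists_last_occ hxmem
      have hx1 : x ∉ w₁ := by
        intro hx1
        obtain ⟨a, b', rfl⟩ := List.append_of_mem hx1
        refine hnp ⟨a, x, b', w₂, by rw [hsplit]; simp, fun y hy => hmin y ?_⟩
        rw [hsplit]; simp [hy]
      have hxS : x ∈ S := hmem x hxmem
      have hcard : (S.erase x).card ≤ n := by
        have := Finset.card_erase_of_mem hxS
        omega
      have hnp' : NoPat w := hnp
      have h1 : w₁.length ≤ 2 ^ n - 1 := by
        apply ih (S.erase x) w₁ hcard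
        · intro y hy
          refine Finset.mem_erase.mpr ⟨?_, hmem y (by rw [hsplit]; simp [hy])⟩
          rintro rfl; exact hx1 hy
        · have : w = [] ++ w₁ ++ (x :: w₂) := by rw [hsplit]; simp
          exact NoPat.of_infix (this ▸ hnp')
      have h2 : w₂.length ≤ 2 ^ n - 1 := by
        apply ih (S.erase x) w₂ hcard
        · intro y hy
          refine Finset.mem_erase.mpr ⟨?_, hmem y (by rw [hsplit]; simp [hy])⟩
          rintro rfl; exact hx2 hy
        · have : w = (w₁ ++ [x]) ++ w₂ ++ [] := by rw [hsplit]; simp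
          exact NoPat.of_infix (this ▸ hnp')
      have hlen : w.length = w₁.length + 1 + w₂.length := by rw [hsplit]; simp; omega
      have hp : 1 ≤ 2 ^ n := Nat.one_le_two_pow
      have : (2:ℕ) ^ (n+1) = 2 * 2 ^ n := by ring
      omega

lemma tgt_next {E V : Type*} (src tgt : E → V) :
    ∀ (c : List E), c.Chain' (fun e e' => tgt e = src e') →
      ∀ f ∈ c.dropLast, tgt f ∈ c.map src := by
  intro c
  induction c with
  | nil => simp
  | cons a t ih =>
    intro hch f hf
    cases t with
    | nil => simp at hf
    | cons b t' =>
      simp only [List.Chain', List.isChain_cons_cons] at hch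
      have hdl : (a :: b :: t').dropLast = a :: (b :: t').dropLast := rfl
      rw [hdl, List.mem_cons] at hf
      rcases hf with rfl | hf
      · simp [hch.1]
      · have := ih hch.2 f hf
        simp only [List.map_cons, List.mem_cons] at this ⊢
        tauto

end Aux

/-- In a finite directed multigraph with vertices `v₀, …, v_N`, there are only finitely
many irreducible cycles. -/
theorem finite_irreducibleCycles (N : ℕ) (E : Type*) [Fintype E]
    (src tgt : E → Fin (N + 1)) :
    {l : List E | IsIrreducibleCycle src tgt l}.Finite := by
  apply (List.finite_length_le E (2 ^ (N + 1) - 1)).subset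
  intro l hl
  obtain ⟨⟨⟨hne, hchain, hhl⟩, hpos⟩, hnosub⟩ := hl
  have hnp : NoPat (l.map src) := by
    rintro ⟨w₁, x, m, w₂, hw, hm⟩
    -- decompose l along the pattern
    obtain ⟨l₁, rest, rfl, hmap1, hmaprest⟩ := List.map_eq_append_iff.mp hw
    obtain ⟨e, rest', rfl, hsrce, hmaprest'⟩ := List.map_eq_cons_iff.mp hmaprest
    obtain ⟨m', rest'', rfl, hmapm, hmaprest''⟩ := List.map_eq_append_iff.mp hmaprest'
    obtain ⟨e', l₂, rfl, hsrce', hmapl2⟩ := List.map_eq_cons_iff.mp hmaprest''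
    set c := e :: m' with hc
    -- chain facts
    have hch2 : (c ++ e' :: l₂).Chain' (fun e e' => tgt e = src e') := by
      have : l₁ ++ e :: (m' ++ e' :: l₂) = l₁ ++ (c ++ e' :: l₂) := by simp [hc]
      rw [this] at hchain; simp only [List.Chain'] at hchain; rw [List.isChain_append] at hchain
      exact hchain.2.1
    simp only [List.Chain'] at hch2; rw [List.isChain_append] at hch2
    have hchc : c.Chain' (fun e e' => tgt e = src e') := hch2.1
    have hlast : tgt (c.getLast (by simp [hc])) = x := by
      have hgl : c.getLast? = some (c.getLast (by simp [hc])) :=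
        List.getLast?_eq_getLast (l := c) (by simp [hc])
      have := hch2.2.2 (c.getLast (by simp [hc])) (by rw [hgl]; rfl) e' rfl
      rw [this, hsrce']
    -- sources of c are x :: m
    have hmapc : c.map src = x :: m := by simp [hc, hsrce, hmapm]
    -- every source and target in c is ≥ x
    have hsrcge : ∀ f ∈ c, x ≤ src f := by
      intro f hf
      have : src f ∈ c.map src := List.mem_map_of_mem (f := src) hf
      rw [hmapc, List.mem_cons] at this
      rcases this with h | h
      · rw [h]
      · exact hm _ h
    have htgtge : ∀ f ∈ c, x ≤ tgt f := by
      intro f hf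
      by_cases hfd : f ∈ c.dropLast
      · have := tgt_next src tgt c hchc f hfd
        rw [hmapc, List.mem_cons] at this
        rcases this with h | h
        · rw [h]
        · exact hm _ h
      · have hfl : f = c.getLast (by simp [hc]) := by
          have hsp := List.dropLast_append_getLast (l := c) (by simp [hc])
          rw [← hsp, List.mem_append] at hf
          rcases hf with h | h
          · exact absurd h hfd
          · simpa using h
        rw [hfl, hlast]
    -- c is a positive cycle
    have hposc : IsPositiveCycle src tgt c := by
      refine ⟨⟨by simp [hc], hchc, ?_⟩, ?_⟩
      · rw [List.getLast?_eq_getLast (l := c) (by simp [hc])]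
        simp [hc, hsrce, hlast]; exact hlast.symm
      · intro e₀ he₀ f hf
        have : e₀ = e := by simp [hc] at he₀; exact he₀.symm
        subst this
        rw [hsrce]
        exact ⟨hsrcge f hf, htgtge f hf⟩
    exact hnosub ⟨l₁, c, e' :: l₂, by simp [hc], by simp [hc]; omega, hposc⟩
  have := walk_len (N + 1) Finset.univ (l.map src) (by simp) (by simp) hnp
  simpa using this
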